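/- Let Ω be a nonempty topological space, let P ≥ 1, and let ψ₁,…,ψ_{M+P} : Ω → ℝ and y₁,…,y_{M+P} ∈ Ω satisfy ψ_m(y_m) = 1 and ψ_m(y_k) = 0 for k < m (so the full interpolation matrix is unit lower triangular). Let w ∈ span{ψ₁,…,ψ_{M+P}} and let w_M = I_M[w] be its interpolant using the first M functions and points. Then the error admits the exact representation w − w_M = Σ_{j=1}^P e_j ψ_{M+j}, where e₁,…,e_P solve Σ_{j=1}^P ψ_{M+j}(y_{M+i}) e_j = w(y_{M+i}) − w_M(y_{M+i}) for i = 1,…,P; in particular, in the expansion w − w_M = Σ_{m=1}^{M+P} κ_m ψ_m the first M coefficients vanish: κ_m = 0 for 1 ≤ m ≤ M. -/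

import Mathlib

open scoped BigOperators

/-- Key triangular lemma: if a unit lower triangular homogeneous system holds at
the first `N` equations, then the first `N` unknowns vanish. -/
lemma tri_partial {n N : ℕ} (B : Fin n → Fin n → ℝ) (d : Fin n → ℝ)
    (hd : ∀ m, B m m = 1) (hu : ∀ m k, k < m → B m k = 0)
    (h0 : ∀ k : Fin n, (k : ℕ) < N → ∑ m, B m k * d m = 0) :
    ∀ m : Fin n, (m : ℕ) < N → d m = 0 := by
  have key : ∀ t : ℕ, ∀ m : Fin n, (m : ℕ) = t → (m : ℕ) < N → d m = 0 := by
    intro t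
    induction t using Nat.strong_induction_on with
    | _ t ih =>
      intro m hmt hmN
      have h := h0 m hmN
      have hterm : ∀ m' : Fin n, B m' m * d m' = if m' = m then d m else 0 := by
        intro m'
        rcases lt_trichotomy m' m with hlt | heq | hgt
        · have hlt' : (m' : ℕ) < (m : ℕ) := hlt
          have hd0 : d m' = 0 := ih (m' : ℕ) (by omega) m' rfl (by omega)
          simp [hd0, Fin.ne_of_lt hlt]
        · simp [heq, hd m]
        · simp [hu m' m hgt, Fin.ne_of_gt hgt]
      rw [Finset.sum_congr rfl (fun m' _ => hterm m')] at h
      simpa using h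
  intro m hm
  exact key (m : ℕ) m rfl hm

theorem empirical_interpolation_exact_error_representation
    {Ω : Type*} [TopologicalSpace Ω] [Nonempty Ω] {M P : ℕ} (hP : 1 ≤ P)
    (ψ : Fin (M + P) → Ω → ℝ) (y : Fin (M + P) → Ω)
    (hdiag : ∀ m, ψ m (y m) = 1)
    (hupper : ∀ m k, k < m → ψ m (y k) = 0)
    (w : Ω → ℝ) (hw : w ∈ Submodule.span ℝ (Set.range ψ))
    (a : Fin M → ℝ)
    (ha : ∀ k : Fin M,
      ∑ m : Fin M, ψ (Fin.castAdd P m) (y (Fin.castAdd P k)) * a m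
        = w (y (Fin.castAdd P k)))
    (wM : Ω → ℝ) (hwM : wM = fun x => ∑ m : Fin M, a m * ψ (Fin.castAdd P m) x)
    (e : Fin P → ℝ)
    (he : ∀ i : Fin P,
      ∑ j : Fin P, ψ (Fin.natAdd M j) (y (Fin.natAdd M i)) * e j
        = w (y (Fin.natAdd M i)) - wM (y (Fin.natAdd M i))) :
    ((fun x => w x - wM x) = fun x => ∑ j : Fin P, e j * ψ (Fin.natAdd M j) x) ∧
    (∀ κ : Fin (M + P) → ℝ,
      ((fun x => w x - wM x) = fun x => ∑ m, κ m * ψ m x) →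
      ∀ m : Fin (M + P), (m : ℕ) < M → κ m = 0) := by
  -- The error vanishes at the first M points.
  have hzero : ∀ k : Fin (M + P), (k : ℕ) < M → w (y k) - wM (y k) = 0 := by
    intro k hk
    have hkc : Fin.castAdd P (⟨(k : ℕ), hk⟩ : Fin M) = k := by
      ext; simp
    have h1 := ha ⟨(k : ℕ), hk⟩
    rw [hkc] at h1
    have h2 : wM (y k) = ∑ m : Fin M, ψ (Fin.castAdd P m) (y k) * a m := by
      rw [hwM]
      exact Finset.sum_congr rfl (fun m _ => mul_comm _ _)
    rw [h2, h1, sub_self]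
  -- Second conclusion.
  have part2 : ∀ κ : Fin (M + P) → ℝ,
      ((fun x => w x - wM x) = fun x => ∑ m, κ m * ψ m x) →
      ∀ m : Fin (M + P), (m : ℕ) < M → κ m = 0 := by
    intro κ hκ
    refine tri_partial (fun m k => ψ m (y k)) κ hdiag hupper ?_
    intro k hk
    have := congrFun hκ (y k)
    have hsum : ∑ m, ψ m (y k) * κ m = ∑ m, κ m * ψ m (y k) :=
      Finset.sum_congr rfl (fun m _ => mul_comm _ _)
    rw [hsum, ← this, hzero k hk]
  refine ⟨?_, part2⟩
  -- Get span coefficients.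
  obtain ⟨c, hc⟩ := (Submodule.mem_span_range_iff_exists_fun ℝ).mp hw
  set b : Fin (M + P) → ℝ := fun m =>
    if h : (m : ℕ) < M then a ⟨(m : ℕ), h⟩ else 0 with hb
  set κ0 : Fin (M + P) → ℝ := fun m => c m - b m with hκ0def
  have hκ0 : (fun x => w x - wM x) = fun x => ∑ m, κ0 m * ψ m x := by
    funext x
    have hwx : w x = ∑ m, c m * ψ m x := by
      rw [← hc]
      simp [Finset.sum_apply]
    have hwMx : wM x = ∑ m, b m * ψ m x := by
      rw [hwM, Fin.sum_univ_add]
      have h1 : ∀ i : Fin M, b (Fin.castAdd P i) * ψ (Fin.castAdd P i) x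
          = a i * ψ (Fin.castAdd P i) x := by
        intro i
        have : b (Fin.castAdd P i) = a i := by
          simp only [hb]
          rw [dif_pos (by simp [Fin.castAdd] : ((Fin.castAdd P i : Fin (M+P)) : ℕ) < M)]
          exact congrArg a (Fin.ext (by simp))
        rw [this]
      have h2 : ∀ j : Fin P, b (Fin.natAdd M j) * ψ (Fin.natAdd M j) x = 0 := by
        intro j
        have : b (Fin.natAdd M j) = 0 := by
          simp only [hb]
          rw [dif_neg (by simp [Fin.natAdd])]
        rw [this, zero_mul]
      rw [Finset.sum_congr rfl (fun i _ => h1 i), Finset.sum_congr rfl (fun j _ => h2 j)]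
      simp
    rw [hwx, hwMx, ← Finset.sum_sub_distrib]
    exact Finset.sum_congr rfl (fun m _ => by simp [hκ0def]; ring)
  have hκ0z : ∀ m : Fin (M + P), (m : ℕ) < M → κ0 m = 0 := part2 κ0 hκ0
  -- Error representation with the tail coefficients.
  have hrep : (fun x => w x - wM x)
      = fun x => ∑ j : Fin P, κ0 (Fin.natAdd M j) * ψ (Fin.natAdd M j) x := by
    funext x
    rw [congrFun hκ0 x, Fin.sum_univ_add]
    have h1 : ∀ i : Fin M, κ0 (Fin.castAdd P i) * ψ (Fin.castAdd P i) x = 0 := by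
      intro i
      rw [hκ0z _ (by simp [Fin.castAdd]), zero_mul]
    rw [Finset.sum_congr rfl (fun i _ => h1 i)]
    simp
  -- The e_j agree with the tail coefficients.
  have hee : ∀ j : Fin P, e j - κ0 (Fin.natAdd M j) = 0 := by
    have := tri_partial (n := P) (N := P)
      (fun j i => ψ (Fin.natAdd M j) (y (Fin.natAdd M i)))
      (fun j => e j - κ0 (Fin.natAdd M j))
      (fun j => hdiag _)
      (fun j i hij => hupper _ _ (by
        simp only [Fin.lt_def, Fin.natAdd] at *
        omega))
      ?_
    · exact fun j => this j j.isLt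
    · intro i _
      have h1 := he i
      have h2 := congrFun hrep (y (Fin.natAdd M i))
      rw [h2] at h1
      show ∑ j : Fin P, ψ (Fin.natAdd M j) (y (Fin.natAdd M i)) * (e j - κ0 (Fin.natAdd M j)) = 0
      calc ∑ j, ψ (Fin.natAdd M j) (y (Fin.natAdd M i)) * (e j - κ0 (Fin.natAdd M j))
          = ∑ j, ψ (Fin.natAdd M j) (y (Fin.natAdd M i)) * e j
            - ∑ j, κ0 (Fin.natAdd M j) * ψ (Fin.natAdd M j) (y (Fin.natAdd M i)) := by
            rw [← Finset.sum_sub_distrib]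
            exact Finset.sum_congr rfl (fun j _ => by ring)
        _ = 0 := by rw [h1]; ring
  funext x
  rw [congrFun hrep x]
  exact Finset.sum_congr rfl (fun j _ => by
    have := hee j
    have : e j = κ0 (Fin.natAdd M j) := by linarith
    rw [this])
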